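/- Let μ_β be the Marchenko–Pastur density μ_β(x) = √((b_β − x)(x − a_β)) / (2πβx) on [a_β, b_β], where a_β = (1−√β)², b_β = (1+√β)², and 0 < β < 1. Then lim_{z→0⁻} ∫_{a_β}^{b_β} 1/(x/β − z) μ_β(x) dx = β/(1−β). -/

import Mathlib

open Filter Real intervalIntegral


lemma hasDeriv_F (a b : ℝ) (ha : 0 < a) (hab : a < b) {x : ℝ} (hx : x ∈ Set.Ioo a b) :
    HasDerivAt (fun x => -Real.sqrt ((b - x) * (x - a)) / x
        - Real.arcsin ((2*x - a - b)/(b - a))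
        + (a + b) / (2 * Real.sqrt (a*b)) * Real.arcsin (((a+b)*x - 2*a*b)/((b-a)*x)))
      (Real.sqrt ((b - x) * (x - a)) / x ^ 2) x := by
  obtain ⟨hax, hxb⟩ := hx
  have hx0 : (0:ℝ) < x := ha.trans hax
  have hba : (0:ℝ) < b - a := by linarith
  have hg : (0:ℝ) < (b - x) * (x - a) := mul_pos (by linarith) (by linarith)
  set s := Real.sqrt ((b - x) * (x - a)) with hs_def
  have hs : 0 < s := Real.sqrt_pos.2 hg
  have hs2 : s ^ 2 = (b - x) * (x - a) := Real.sq_sqrt hg.le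
  set t := Real.sqrt (a * b) with ht_def
  have ht : 0 < t := Real.sqrt_pos.2 (mul_pos ha (ha.trans hab))
  have ht2 : t ^ 2 = a * b := Real.sq_sqrt (mul_pos ha (ha.trans hab)).le
  -- derivative of the inner polynomial
  have hpoly : HasDerivAt (fun x : ℝ => (b - x) * (x - a)) (a + b - 2*x) x := by
    have := ((hasDerivAt_id x).const_sub b).mul ((hasDerivAt_id x).sub_const a)
    exact this.congr_deriv (by simp only [id_eq]; ring)
  have hsqrt : HasDerivAt (fun x : ℝ => Real.sqrt ((b - x) * (x - a)))
      ((a + b - 2*x) / (2 * s)) x := hpoly.sqrt hg.ne'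
  have h1 : HasDerivAt (fun x : ℝ => -Real.sqrt ((b - x) * (x - a)) / x)
      ((-((a + b - 2*x) / (2 * s)) * x - (-s) * 1) / x ^ 2) x :=
    (hsqrt.neg).div (hasDerivAt_id x) hx0.ne'
  -- first arcsin
  have hu1 : HasDerivAt (fun x : ℝ => (2*x - a - b)/(b - a)) (2 / (b - a)) x := by
    have := (((hasDerivAt_id x).const_mul 2).sub_const a).sub_const b
    exact (this.div_const (b - a)).congr_deriv (by ring)
  have hu1a : (2*x - a - b)/(b - a) ≠ -1 := by
    rw [ne_eq, div_eq_iff hba.ne']; intro h; nlinarith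
  have hu1b : (2*x - a - b)/(b - a) ≠ 1 := by
    rw [ne_eq, div_eq_iff hba.ne']; intro h; nlinarith
  have h2 : HasDerivAt (fun x : ℝ => Real.arcsin ((2*x - a - b)/(b - a)))
      (1 / Real.sqrt (1 - ((2*x - a - b)/(b - a)) ^ 2) * (2 / (b - a))) x :=
    by have := (Real.hasDerivAt_arcsin hu1a hu1b).comp x hu1; exact this
  have e1 : Real.sqrt (1 - ((2*x - a - b)/(b - a)) ^ 2) = 2 * s / (b - a) := by
    have : 1 - ((2*x - a - b)/(b - a)) ^ 2 = (2 * s / (b - a)) ^ 2 := by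
      rw [div_pow, div_pow, mul_pow, hs2]; field_simp; ring
    rw [this, Real.sqrt_sq (by positivity)]
  -- second arcsin
  have hu2 : HasDerivAt (fun x : ℝ => ((a+b)*x - 2*a*b)/((b-a)*x))
      (((a+b) * ((b-a)*x) - ((a+b)*x - 2*a*b) * (b-a)) / ((b-a)*x) ^ 2) x := by
    have h := (((hasDerivAt_id x).const_mul (a+b)).sub_const (2*a*b)).div
      ((hasDerivAt_id x).const_mul (b-a)) (by positivity)
    exact h.congr_deriv (by simp only [id_eq]; ring)
  have hden : (0:ℝ) < (b - a) * x := by positivity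
  have hu2a : ((a+b)*x - 2*a*b)/((b-a)*x) ≠ -1 := by
    rw [ne_eq, div_eq_iff hden.ne']; intro h; nlinarith
  have hu2b : ((a+b)*x - 2*a*b)/((b-a)*x) ≠ 1 := by
    rw [ne_eq, div_eq_iff hden.ne']; intro h; nlinarith
  have h3 : HasDerivAt (fun x : ℝ => Real.arcsin (((a+b)*x - 2*a*b)/((b-a)*x)))
      (1 / Real.sqrt (1 - (((a+b)*x - 2*a*b)/((b-a)*x)) ^ 2) *
        (((a+b) * ((b-a)*x) - ((a+b)*x - 2*a*b) * (b-a)) / ((b-a)*x) ^ 2)) x :=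
    by have := (Real.hasDerivAt_arcsin hu2a hu2b).comp x hu2; exact this
  have e2 : Real.sqrt (1 - (((a+b)*x - 2*a*b)/((b-a)*x)) ^ 2) = 2 * t * s / ((b - a) * x) := by
    have : 1 - (((a+b)*x - 2*a*b)/((b-a)*x)) ^ 2 = (2 * t * s / ((b - a) * x)) ^ 2 := by
      field_simp
      linear_combination (4*s^2)*ht2 + (4*a*b)*hs2 - (8*t^2)*hs2 - (8*(b-x)*(x-a))*ht2
    rw [this, Real.sqrt_sq (by positivity)]
  have H := (h1.sub h2).add ((h3.const_mul ((a + b) / (2 * t))))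
  refine H.congr_deriv ?_
  symm
  rw [e1, e2]
  have h2t : (2:ℝ) * t ≠ 0 := by positivity
  rw [← sub_eq_zero]
  field_simp
  ring_nf
  linear_combination (2*x*(a+b))*ht2

lemma integral_sqrt_div_sq (a b : ℝ) (ha : 0 < a) (hab : a < b) :
    ∫ x in a..b, Real.sqrt ((b - x) * (x - a)) / x ^ 2
      = Real.pi * ((a + b) / (2 * Real.sqrt (a*b)) - 1) := by
  have hba : (0:ℝ) < b - a := by linarith
  set F : ℝ → ℝ := fun x => -Real.sqrt ((b - x) * (x - a)) / x
      - Real.arcsin ((2*x - a - b)/(b - a))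
      + (a + b) / (2 * Real.sqrt (a*b)) * Real.arcsin (((a+b)*x - 2*a*b)/((b-a)*x)) with hF
  have hc1 : ContinuousOn (fun x : ℝ => -Real.sqrt ((b - x) * (x - a)) / x) (Set.Icc a b) :=
    ((Real.continuous_sqrt.comp (by continuity)).continuousOn.neg).div
      continuousOn_id (fun x hx => (ha.trans_le hx.1).ne')
  have hc2 : ContinuousOn (fun x : ℝ => Real.arcsin ((2*x - a - b)/(b - a))) (Set.Icc a b) :=
    (Real.continuous_arcsin.comp (by continuity)).continuousOn
  have hc3 : ContinuousOn (fun x : ℝ =>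
      (a + b) / (2 * Real.sqrt (a*b)) * Real.arcsin (((a+b)*x - 2*a*b)/((b-a)*x))) (Set.Icc a b) := by
    apply continuousOn_const.mul
    apply Real.continuous_arcsin.comp_continuousOn
    exact ((by continuity : Continuous fun x : ℝ => (a+b)*x - 2*a*b).continuousOn).div
      ((by continuity : Continuous fun x : ℝ => (b-a)*x).continuousOn)
      (fun x hx => ne_of_gt (mul_pos hba (ha.trans_le hx.1)))
  have hcont : ContinuousOn F (Set.Icc a b) := (hc1.sub hc2).add hc3
  have hint : IntervalIntegrable (fun x => Real.sqrt ((b - x) * (x - a)) / x ^ 2)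
      MeasureTheory.volume a b := by
    apply ContinuousOn.intervalIntegrable
    rw [Set.uIcc_of_le hab.le]
    exact ((Real.continuous_sqrt.comp (by continuity)).continuousOn).div
      (by continuity : Continuous fun x : ℝ => x ^ 2).continuousOn
      (fun x hx => pow_ne_zero 2 (ha.trans_le hx.1).ne')
  have hFTC := intervalIntegral.integral_eq_sub_of_hasDeriv_right_of_le hab.le hcont
    (fun x hx => (hasDeriv_F a b ha hab hx).hasDerivWithinAt) hint
  rw [hFTC, hF]
  have hb1 : Real.sqrt ((b - b) * (b - a)) = 0 := by
    rw [show (b-b)*(b-a) = 0 by ring, Real.sqrt_zero]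
  have ha1 : Real.sqrt ((b - a) * (a - a)) = 0 := by
    rw [show (b-a)*(a-a) = 0 by ring, Real.sqrt_zero]
  have e1 : (2*b - a - b)/(b - a) = 1 := by
    rw [show 2*b - a - b = b - a by ring, div_self hba.ne']
  have e2 : ((a+b)*b - 2*a*b)/((b-a)*b) = 1 := by
    rw [show (a+b)*b - 2*a*b = (b-a)*b by ring,
      div_self (ne_of_gt (mul_pos hba (ha.trans hab)))]
  have e3 : (2*a - a - b)/(b - a) = -1 := by
    rw [show 2*a - a - b = -(b - a) by ring, neg_div, div_self hba.ne']
  have e4 : ((a+b)*a - 2*a*b)/((b-a)*a) = -1 := by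
    rw [show (a+b)*a - 2*a*b = -((b-a)*a) by ring, neg_div,
      div_self (ne_of_gt (mul_pos hba ha))]
  simp only [hb1, ha1, e1, e2, e3, e4, Real.arcsin_one, Real.arcsin_neg_one,
    neg_zero, zero_div]
  ring

/-- For the Marchenko–Pastur density `μ_β(x) = √((b_β−x)(x−a_β))/(2πβx)` on
`[a_β, b_β]` with `a_β = (1−√β)²`, `b_β = (1+√β)²` and `0 < β < 1`,
`lim_{z→0⁻} ∫_{a_β}^{b_β} μ_β(x)/(x/β − z) dx = β/(1−β)`. -/
theorem marchenko_pastur_stieltjes_limit_at_zero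
    (β : ℝ) (hβ : β ∈ Set.Ioo (0 : ℝ) 1) :
    Tendsto (fun z : ℝ =>
        ∫ x in ((1 - Real.sqrt β) ^ 2)..((1 + Real.sqrt β) ^ 2),
          (1 / (x / β - z)) *
            (Real.sqrt (((1 + Real.sqrt β) ^ 2 - x) * (x - (1 - Real.sqrt β) ^ 2))
              / (2 * Real.pi * β * x)))
      (nhdsWithin 0 (Set.Iio 0)) (nhds (β / (1 - β))) := by
  obtain ⟨hβ0, hβ1⟩ := hβ
  set s := Real.sqrt β with hs_def
  have hs0 : 0 < s := Real.sqrt_pos.2 hβ0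
  have hs2 : s ^ 2 = β := Real.sq_sqrt hβ0.le
  have hs1 : s < 1 := by nlinarith
  set a := (1 - s) ^ 2 with ha_def
  set b := (1 + s) ^ 2 with hb_def
  have h1s : 0 < 1 - s := by linarith
  have ha : 0 < a := by positivity
  have hab : a < b := by nlinarith
  have hπ : 0 < Real.pi := Real.pi_pos
  -- the limit function
  set f : ℝ → ℝ := fun x => (1 / (x / β)) * (Real.sqrt ((b - x) * (x - a)) / (2 * Real.pi * β * x))
    with hf_def
  have hfcont : ContinuousOn f (Set.Icc a b) := by
    apply ContinuousOn.mul
    · exact continuousOn_const.div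
        ((continuous_id.div_const β).continuousOn)
        (fun x hx => by
          have : 0 < x := ha.trans_le hx.1
          positivity)
    · exact ((Real.continuous_sqrt.comp (by continuity)).continuousOn).div
        (by continuity : Continuous fun x : ℝ => 2 * Real.pi * β * x).continuousOn
        (fun x hx => by
          have : 0 < x := ha.trans_le hx.1
          positivity)
  have key : Tendsto (fun z : ℝ =>
      ∫ x in a..b, (1 / (x / β - z)) * (Real.sqrt ((b - x) * (x - a)) / (2 * Real.pi * β * x)))
      (nhdsWithin 0 (Set.Iio 0)) (nhds (∫ x in a..b, f x)) := by
    apply intervalIntegral.tendsto_integral_filter_of_dominated_convergence f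
    · -- measurability
      filter_upwards [self_mem_nhdsWithin] with z hz
      have hz0 : z < 0 := hz
      apply ContinuousOn.aestronglyMeasurable _ measurableSet_uIoc
      rw [Set.uIoc_of_le hab.le]
      apply ContinuousOn.mul
      · exact continuousOn_const.div
          ((continuous_id.div_const β).sub continuous_const).continuousOn
          (fun x hx => by
            have hx0 : 0 < x := ha.trans hx.1
            have : 0 < x / β - z := by
              have : 0 < x / β := by positivity
              linarith
            exact this.ne')
      · exact ((Real.continuous_sqrt.comp (by continuity)).continuousOn).div
          (by continuity : Continuous fun x : ℝ => 2 * Real.pi * β * x).continuousOn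
          (fun x hx => by
            have : 0 < x := ha.trans hx.1
            positivity)
    · -- bound
      filter_upwards [self_mem_nhdsWithin] with z hz
      apply MeasureTheory.ae_of_all
      intro x hx
      rw [Set.uIoc_of_le hab.le] at hx
      have hz0 : z < 0 := hz
      have hx0 : 0 < x := ha.trans hx.1
      have hxβ : 0 < x / β := by positivity
      have hden : 0 < x / β - z := by linarith
      have hμ : 0 ≤ Real.sqrt ((b - x) * (x - a)) / (2 * Real.pi * β * x) := by positivity
      rw [Real.norm_eq_abs, abs_of_nonneg (mul_nonneg (by positivity) hμ)]
      apply mul_le_mul_of_nonneg_right _ hμ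
      exact one_div_le_one_div_of_le hxβ (by linarith)
    · -- bound integrable
      apply ContinuousOn.intervalIntegrable
      rw [Set.uIcc_of_le hab.le]
      exact hfcont
    · -- pointwise limit
      apply MeasureTheory.ae_of_all
      intro x hx
      rw [Set.uIoc_of_le hab.le] at hx
      have hx0 : 0 < x := ha.trans hx.1
      have hxβ : 0 < x / β := by positivity
      have hcont : ContinuousAt (fun z : ℝ =>
          (1 / (x / β - z)) * (Real.sqrt ((b - x) * (x - a)) / (2 * Real.pi * β * x))) 0 := by
        apply ContinuousAt.mul _ continuousAt_const
        apply ContinuousAt.div continuousAt_const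
        · exact (continuousAt_const.sub continuousAt_id)
        · simpa using hxβ.ne'
      have := hcont.tendsto.mono_left (nhdsWithin_le_nhds (s := Set.Iio 0))
      simpa [hf_def] using this
  -- compute the limit integral
  have hab' : a * b = (1 - β) ^ 2 := by rw [← hs2]; ring
  have hsab : Real.sqrt (a * b) = 1 - β := by
    rw [hab', Real.sqrt_sq (by linarith)]
  have hval : (∫ x in a..b, f x) = β / (1 - β) := by
    have hcongr : (∫ x in a..b, f x)
        = ∫ x in a..b, (1 / (2 * Real.pi)) * (Real.sqrt ((b - x) * (x - a)) / x ^ 2) := by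
      apply intervalIntegral.integral_congr
      intro x hx
      rw [Set.uIcc_of_le hab.le] at hx
      have hx0 : 0 < x := ha.trans_le hx.1
      rw [hf_def]
      field_simp
    rw [hcongr, intervalIntegral.integral_const_mul, integral_sqrt_div_sq a b ha hab, hsab]
    have hab2 : a + b = 2 + 2 * β := by rw [← hs2]; ring
    rw [hab2]
    have h1β : (1:ℝ) - β ≠ 0 := by linarith
    field_simp
    ring
  rw [← hval]
  exact key
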